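/- Let m,n ≥ 3, let Λ be the m×n torus lattice, and let J^x = (J^x_p ≥ 0 : p ∈ F), J^z = (J^z_s ≥ 0 : s ∈ V) be nonnegative couplings. Let A ⊆ E and set Z_A = ∏_{e∈A} σ⁽³⁾_e. If there is no subset D ⊆ V such that A equals the symmetric difference △_{s∈D} {e ∈ E : e ∼ s} (equivalently, no D ⊆ V with Z_A = ∏_{s∈D} Z_s), then the toric code equilibrium state satisfies ⟨Z_A⟩ = 0. -/

import Mathlib

open scoped BigOperators

namespace Toric

/-- Vertices of the `m × n` torus lattice. Faces are also indexed by `Vtx`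
(the face `p` is the unit square whose lower-left corner is `p`). -/
abbrev Vtx (m n : ℕ) := ZMod m × ZMod n

/-- Edges of the torus: `(s, true)` is the horizontal edge from `s` to its right
neighbour, `(s, false)` the vertical edge from `s` to its upper neighbour. -/
abbrev Edge (m n : ℕ) := Vtx m n × Bool

variable (m n : ℕ)

/-- The four edges incident to the vertex `s`, in a fixed order:
right, up, left, down. -/
def star (s : Vtx m n) : Fin 4 → Edge m n :=
  ![(s, true), (s, false), ((s.1 - 1, s.2), true), ((s.1, s.2 - 1), false)]

/-- The four edges bounding the face `p`, in a fixed order: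
bottom, left, top, right. -/
def faceEdge (p : Vtx m n) : Fin 4 → Edge m n :=
  ![(p, true), (p, false), ((p.1, p.2 + 1), true), ((p.1 + 1, p.2), false)]

/-- The set of the four edges incident to the vertex `s` (written `e ∼ s`). -/
def starSet (s : Vtx m n) : Finset (Edge m n) := Finset.univ.image (star m n s)

/-- The set of the four edges bounding the face `p` (written `e ∼ p`). -/
def faceSet (p : Vtx m n) : Finset (Edge m n) := Finset.univ.image (faceEdge m n p)

/-- Arrow configurations: each edge points right/up (`true`) or left/down (`false`). -/
abbrev AConf (m n : ℕ) := Edge m n → Bool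

/-- Which of the four edges at `s` are incoming (point towards `s`). -/
def incVec (d : AConf m n) (s : Vtx m n) : Fin 4 → Bool :=
  ![!d (star m n s 0), !d (star m n s 1), d (star m n s 2), d (star m n s 3)]

/-- Eight-vertex condition: every vertex has an even number of incoming arrows. -/
def IsEightVertex (d : AConf m n) : Prop :=
  ∀ s : Vtx m n, Even (Finset.univ.filter (fun i => incVec m n d s i = true)).card

/-- A local vertex type `η : Fin 4 → Bool` (arrow directions of the four incident
edges, in the order right, up, left, down) is one of the eight allowed vertex types
I–VIII iff the number of incoming arrows is even. -/
def IsVertexType (η : Fin 4 → Bool) : Prop :=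
  Even (Finset.univ.filter
    (fun i => (![!η 0, !η 1, η 2, η 3] : Fin 4 → Bool) i = true)).card

/-- The event `A^η_C` that every vertex of `C` exhibits the type `η` or its
total reversal. -/
def EventA (η : Fin 4 → Bool) (C : Finset (Vtx m n)) (d : AConf m n) : Prop :=
  ∀ s ∈ C, (∀ i, d (star m n s i) = η i) ∨ (∀ i, d (star m n s i) = !η i)

/-- The event `A^{η,ν}_C` that every vertex of `C` exhibits the type `η` or `ν`
or one of their total reversals. -/
def EventA2 (η ν : Fin 4 → Bool) (C : Finset (Vtx m n)) (d : AConf m n) : Prop :=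
  ∀ s ∈ C, (∀ i, d (star m n s i) = η i) ∨ (∀ i, d (star m n s i) = !η i) ∨
    (∀ i, d (star m n s i) = ν i) ∨ (∀ i, d (star m n s i) = !ν i)

/-- A non-contractible cycle of vertices of `C`: a cyclic sequence of vertices of `C`
whose consecutive vertices are nearest neighbours on the torus (with the actual
`ℤ²`-valued unit steps recorded), and whose winding number (the total displacement
in `ℤ²`) is nonzero. -/
structure NCCycle (C : Set (Vtx m n)) where
  len : ℕ
  len_pos : 0 < len
  v : ℕ → Vtx m n
  step : ℕ → ℤ × ℤ
  mem : ∀ i < len, v i ∈ C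
  unit : ∀ i < len,
    step i = (1, 0) ∨ step i = (-1, 0) ∨ step i = (0, 1) ∨ step i = (0, -1)
  succ : ∀ i < len,
    v (i + 1) = ((v i).1 + ((step i).1 : ZMod m), (v i).2 + ((step i).2 : ZMod n))
  closed : v len = v 0
  winding : ∑ i ∈ Finset.range len, step i ≠ 0

/-- Hypothesis (★): either `C` contains no non-contractible cycle, or every
non-contractible cycle in `C` has even length. -/
def StarHyp (C : Set (Vtx m n)) : Prop :=
  IsEmpty (NCCycle m n C) ∨ ∀ γ : NCCycle m n C, Even γ.len

section torusProb
variable [NeZero m] [NeZero n]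

/-- The set `Δ_8vx` of eight-vertex configurations on the torus. -/
noncomputable def Δ8 : Finset (AConf m n) :=
  haveI := Classical.decPred (IsEightVertex m n)
  Finset.univ.filter (IsEightVertex m n)

/-- The uniform eight-vertex probability measure `μ`. -/
noncomputable def prob (P : AConf m n → Prop) : ℝ :=
  haveI := Classical.decPred P
  (((Δ8 m n).filter P).card : ℝ) / ((Δ8 m n).card : ℝ)

end torusProb

/-- Spin configurations `Ω = {-1,+1}^E`. -/
abbrev SConf (m n : ℕ) := Edge m n → ℤˣ

section matrices
variable [NeZero m] [NeZero n]

/-- Real matrices indexed by the spin configurations (i.e. operators expressed in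
the `σ³` product basis). -/
abbrev Mat (m n : ℕ) [NeZero m] [NeZero n] := Matrix (SConf m n) (SConf m n) ℝ

/-- The spin configuration `x^p`, equal to `-1` exactly on the edges of the face `p`. -/
def xconf (p : Vtx m n) : SConf m n := fun e => if e ∈ faceSet m n p then -1 else 1

/-- The spin configuration equal to `-1` exactly on the edges of a set `A`. -/
def aconf (A : Finset (Edge m n)) : SConf m n := fun e => if e ∈ A then -1 else 1

/-- The plaquette operator `X_p = ∏_{e ∼ p} σ¹_e`: the permutation matrix flipping
the spins on the four edges of `p`. -/
def X (p : Vtx m n) : Mat m n := fun τ ω => if τ = xconf m n p * ω then 1 else 0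

/-- `X_A = ∏_{e ∈ A} σ¹_e`: the permutation matrix flipping the spins on `A`. -/
def XA (A : Finset (Edge m n)) : Mat m n := fun τ ω => if τ = aconf m n A * ω then 1 else 0

/-- The product `∏_{p ∈ C} X_p` of plaquette operators: the permutation matrix
flipping the spins around all faces of `C`. -/
def XProd (C : Finset (Vtx m n)) : Mat m n :=
  fun τ ω => if τ = (∏ p ∈ C, xconf m n p) * ω then 1 else 0

/-- The star operator `Z_s = ∏_{e ∼ s} σ³_e` (a diagonal matrix). -/
def Z (s : Vtx m n) : Mat m n :=
  Matrix.diagonal fun ω => (((∏ e ∈ starSet m n s, ω e : ℤˣ) : ℤ) : ℝ)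

/-- `Z_A = ∏_{e ∈ A} σ³_e` (a diagonal matrix). -/
def ZA (A : Finset (Edge m n)) : Mat m n :=
  Matrix.diagonal fun ω => (((∏ e ∈ A, ω e : ℤˣ) : ℤ) : ℝ)

/-- The product `∏_{s ∈ D} Z_s` of star operators (a diagonal matrix). -/
def ZProd (D : Finset (Vtx m n)) : Mat m n :=
  Matrix.diagonal fun ω => (((∏ s ∈ D, ∏ e ∈ starSet m n s, ω e : ℤˣ) : ℤ) : ℝ)

/-- The toric code Hamiltonian `H = -∑_p Jˣ_p X_p - ∑_s Jᶻ_s Z_s`. -/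
noncomputable def H (Jx Jz : Vtx m n → ℝ) : Mat m n :=
  -∑ p : Vtx m n, Jx p • X m n p - ∑ s : Vtx m n, Jz s • Z m n s

/-- Matrix exponential. -/
noncomputable def mexp (A : Mat m n) : Mat m n := NormedSpace.exp A

/-- The equilibrium state `⟨A⟩ = tr(A e^{-H}) / tr(e^{-H})`. -/
noncomputable def gibbs (Jx Jz : Vtx m n → ℝ) (A : Mat m n) : ℝ :=
  (A * mexp m n (-H m n Jx Jz)).trace / (mexp m n (-H m n Jx Jz)).trace

end matrices

/-- The scalar `I^ε_s(σ) = (1/16) ∏_{i=1}^4 (1 + ε_i σ_i(s))`. -/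
noncomputable def Ifun (ε : Fin 4 → ℤˣ) (s : Vtx m n) (σ : SConf m n) : ℝ :=
  (1 / 16 : ℝ) * ∏ i : Fin 4, (1 + ((ε i : ℤ) : ℝ) * ((σ (star m n s i) : ℤ) : ℝ))

/-- The scalar `Ī^ε_s(σ) = (1/16) ∏_{i=1}^4 (1 - ε_i σ_i(s))`. -/
noncomputable def Ibar (ε : Fin 4 → ℤˣ) (s : Vtx m n) (σ : SConf m n) : ℝ :=
  (1 / 16 : ℝ) * ∏ i : Fin 4, (1 - ((ε i : ℤ) : ℝ) * ((σ (star m n s i) : ℤ) : ℝ))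

/-- `I^ε_C(σ) = ∏_{s ∈ C} (I^ε_s(σ) + Ī^ε_s(σ))`: the indicator that around every
vertex of `C` the spins all agree with `ε` or are all opposite. -/
noncomputable def IC (ε : Fin 4 → ℤˣ) (C : Finset (Vtx m n)) (σ : SConf m n) : ℝ :=
  ∏ s ∈ C, (Ifun m n ε s σ + Ibar m n ε s σ)

/-- `I^{ε,δ}_C(σ) = ∏_{s ∈ C} (I^ε_s(σ) + Ī^ε_s(σ) + I^δ_s(σ) + Ī^δ_s(σ))`. -/
noncomputable def IC2 (ε δ : Fin 4 → ℤˣ) (C : Finset (Vtx m n)) (σ : SConf m n) : ℝ :=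
  ∏ s ∈ C, (Ifun m n ε s σ + Ibar m n ε s σ + Ifun m n δ s σ + Ibar m n δ s σ)

section matrices2
variable [NeZero m] [NeZero n]

/-- The (diagonal) operator `Q^ε_C = ∏_{s ∈ C} (P^ε_s + P̄^ε_s)`, where
`P^ε_s = (1/16) ∏_i (1 + ε_i σ³_i(s))` and `P̄^ε_s = (1/16) ∏_i (1 - ε_i σ³_i(s))`. -/
noncomputable def Q (ε : Fin 4 → ℤˣ) (C : Finset (Vtx m n)) : Mat m n :=
  Matrix.diagonal (IC m n ε C)

/-- The (diagonal) operator `Q^{ε,δ}_C = ∏_{s ∈ C} (P^ε_s + P̄^ε_s + P^δ_s + P̄^δ_s)`. -/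
noncomputable def Q2 (ε δ : Fin 4 → ℤˣ) (C : Finset (Vtx m n)) : Mat m n :=
  Matrix.diagonal (IC2 m n ε δ C)

/-- Expectation `E_J[f]` under the four-body Ising measure
`P_J(σ) ∝ exp(∑_s J_s ∏_{e ∼ s} σ_e)`. -/
noncomputable def isingE (J : Vtx m n → ℝ) (f : SConf m n → ℝ) : ℝ :=
  (∑ σ : SConf m n, f σ *
      Real.exp (∑ s : Vtx m n, J s * (((∏ e ∈ starSet m n s, σ e : ℤˣ) : ℤ) : ℝ))) /
    (∑ σ : SConf m n,
      Real.exp (∑ s : Vtx m n, J s * (((∏ e ∈ starSet m n s, σ e : ℤˣ) : ℤ) : ℝ)))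

end matrices2

end Toric

section AuxProof
open Toric

namespace ToricAux

lemma dual_factor {K : Type} [Field K] {ι κ : Type} [Fintype ι] [Fintype κ]
    [DecidableEq ι] [DecidableEq κ]
    (L : (ι → K) →ₗ[K] (κ → K)) (a : ι → K)
    (ha : ∀ b, L b = 0 → ∑ e, a e * b e = 0) :
    ∃ d : κ → K, ∀ e, a e = ∑ s, d s * L (Pi.single e 1) s := by
  classical
  set φ : (ι → K) →ₗ[K] K :=
    { toFun := fun b => ∑ e, a e * b e
      map_add' := by intro x y; simp [mul_add, Finset.sum_add_distrib]
      map_smul' := by intro c x; simp [Finset.mul_sum, mul_left_comm] } with hφ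
  have hker : LinearMap.ker L ≤ LinearMap.ker φ := fun b hb => ha b hb
  set ψ' : ((ι → K) ⧸ LinearMap.ker L) →ₗ[K] K := (LinearMap.ker L).liftQ φ hker with hψ'
  set eqv := L.quotKerEquivRange with heqv
  obtain ⟨ψ, hψ⟩ := LinearMap.exists_extend (ψ'.comp (eqv.symm : LinearMap.range L →ₗ[K] _))
  have hfac : ∀ b, ψ (L b) = φ b := by
    intro b
    have h1 : eqv (Submodule.Quotient.mk b) = ⟨L b, LinearMap.mem_range_self L b⟩ := by
      ext; simp [heqv, LinearMap.quotKerEquivRange_apply_mk]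
    have h2 : eqv.symm ⟨L b, LinearMap.mem_range_self L b⟩ = Submodule.Quotient.mk b := by
      rw [← h1, LinearEquiv.symm_apply_apply]
    calc ψ (L b) = (ψ.comp (LinearMap.range L).subtype) ⟨L b, LinearMap.mem_range_self L b⟩ := rfl
      _ = ψ' (eqv.symm ⟨L b, LinearMap.mem_range_self L b⟩) := by rw [hψ]; rfl
      _ = ψ' (Submodule.Quotient.mk b) := by rw [h2]
      _ = φ b := Submodule.liftQ_apply _ _ _
  have hψsum : ∀ y : κ → K, ψ y = ∑ s, y s * ψ (Pi.single s 1) := by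
    intro y
    have hy : y = ∑ s, y s • (Pi.single s (1:K) : κ → K) := by
      funext t
      simp [Finset.sum_apply, Pi.single_apply, mul_ite, Finset.sum_ite_eq']
    nth_rewrite 1 [hy]
    rw [map_sum]
    simp [smul_eq_mul]
  refine ⟨fun s => ψ (Pi.single s 1), fun e => ?_⟩
  have h3 := hfac (Pi.single e 1)
  rw [hψsum (L (Pi.single e 1))] at h3
  have h4 : φ (Pi.single e 1) = a e := by
    simp [hφ, Pi.single_apply, mul_ite, Finset.sum_ite_eq']
  rw [h4] at h3
  rw [← h3]
  exact Finset.sum_congr rfl fun s _ => mul_comm _ _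

variable (m n : ℕ) [NeZero m] [NeZero n]

lemma zmod_cast_zero_iff (k : ℕ) : ((k : ZMod 2) = 0) ↔ Even k := by
  rw [ZMod.natCast_eq_zero_iff]
  exact ⟨fun h => (even_iff_two_dvd).mpr h, fun h => (even_iff_two_dvd).mp h⟩

lemma zmod_cast_one_iff (k : ℕ) : ((k : ZMod 2) = 1) ↔ Odd k := by
  have hx : ∀ x : ZMod 2, x = 1 ↔ ¬ x = 0 := by decide
  rw [hx, zmod_cast_zero_iff, Nat.not_even_iff_odd]

lemma conf_mul_self (c : SConf m n) : c * c = 1 :=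
  funext fun e => Int.units_mul_self (c e)

lemma units_pow_ite (u : ℤˣ) (k : ℕ) : u ^ k = if Odd k then u else 1 := by
  rcases Int.units_eq_one_or u with h | h <;> subst h
  · simp
  · by_cases hk : Odd k
    · simp [hk, Odd.neg_one_pow hk]
    · simp [hk, Even.neg_one_pow (Nat.not_odd_iff_even.mp hk)]

lemma prod_aconf (B S : Finset (Edge m n)) [DecidablePred (· ∈ B)] :
    ∏ e ∈ S, aconf m n B e = (-1 : ℤˣ) ^ (S.filter (· ∈ B)).card := by
  classical
  rw [← Finset.prod_filter_mul_prod_filter_not S (· ∈ B),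
    Finset.prod_congr rfl (fun e he => show aconf m n B e = -1 by
      simp [aconf, (Finset.mem_filter.mp he).2]),
    Finset.prod_congr rfl (fun e he => show aconf m n B e = 1 by
      simp [aconf, (Finset.mem_filter.mp he).2])]
  simp

lemma sum_zmod_card {α : Type*} (S : Finset α) (b : α → ZMod 2) :
    ∑ e ∈ S, b e = ((S.filter (fun e => b e = 1)).card : ZMod 2) := by
  classical
  rw [← Finset.sum_filter_add_sum_filter_not S (fun e => b e = 1)]
  have h0 : ∀ x : ZMod 2, ¬ x = 1 → x = 0 := by decide
  rw [Finset.sum_congr rfl (fun e he => (Finset.mem_filter.mp he).2),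
      Finset.sum_congr rfl (fun e he => h0 _ (Finset.mem_filter.mp he).2)]
  simp

lemma XA_mul_XA (B : Finset (Edge m n)) : XA m n B * XA m n B = 1 := by
  ext τ ω
  simp only [Matrix.mul_apply, XA, Matrix.one_apply, mul_ite, mul_one, mul_zero]
  rw [Finset.sum_ite_eq' Finset.univ (aconf m n B * ω)]
  simp [← mul_assoc, conf_mul_self]

lemma XA_comm_X (B : Finset (Edge m n)) (p : Vtx m n) :
    Commute (XA m n B) (X m n p) := by
  show _ = _
  ext τ ω
  simp only [Matrix.mul_apply, XA, X, mul_ite, mul_one, mul_zero, ite_mul, one_mul, zero_mul]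
  rw [Finset.sum_ite_eq' Finset.univ (xconf m n p * ω), Finset.sum_ite_eq' Finset.univ (aconf m n B * ω)]
  simp [mul_left_comm]

lemma XA_comm_Z (B : Finset (Edge m n)) (s : Vtx m n)
    (h1 : ∏ e ∈ starSet m n s, aconf m n B e = 1) :
    Commute (XA m n B) (Z m n s) := by
  show _ = _
  ext τ ω
  simp only [Z, Matrix.mul_diagonal, Matrix.diagonal_mul, XA]
  by_cases hτ : τ = aconf m n B * ω
  · subst hτ
    have hpr : ∏ e ∈ starSet m n s, (aconf m n B * ω) e = ∏ e ∈ starSet m n s, ω e := by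
      calc ∏ e ∈ starSet m n s, (aconf m n B * ω) e
          = (∏ e ∈ starSet m n s, aconf m n B e) * ∏ e ∈ starSet m n s, ω e := by
            simp [Pi.mul_apply, Finset.prod_mul_distrib]
        _ = ∏ e ∈ starSet m n s, ω e := by rw [h1, one_mul]
    rw [if_pos rfl, one_mul, mul_one, hpr]
  · simp [hτ]

lemma ZA_anticomm_XA (B A : Finset (Edge m n))
    (h1 : ∏ e ∈ A, aconf m n B e = -1) :
    ZA m n A * XA m n B = -(XA m n B * ZA m n A) := by
  ext τ ω
  simp only [ZA, Matrix.mul_diagonal, Matrix.diagonal_mul, XA, Matrix.neg_apply]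
  by_cases hτ : τ = aconf m n B * ω
  · subst hτ
    have hpr : ∏ e ∈ A, (aconf m n B * ω) e = -(∏ e ∈ A, ω e) := by
      calc ∏ e ∈ A, (aconf m n B * ω) e
          = (∏ e ∈ A, aconf m n B e) * ∏ e ∈ A, ω e := by
            simp [Pi.mul_apply, Finset.prod_mul_distrib]
        _ = -(∏ e ∈ A, ω e) := by rw [h1]; simp
    rw [if_pos rfl, one_mul, mul_one, hpr]
    push_cast
    ring
  · simp [hτ]

lemma XA_comm_exp (B : Finset (Edge m n)) (M : Mat m n)
    (hc : Commute (XA m n B) M) :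
    XA m n B * mexp m n M = mexp m n M * XA m n B := by
  have hXX := XA_mul_XA m n B
  let U : (Mat m n)ˣ := ⟨XA m n B, XA m n B, hXX, hXX⟩
  have hconj : (U : Mat m n) * M * (↑U⁻¹ : Mat m n) = M := by
    show XA m n B * M * XA m n B = M
    rw [hc.eq, mul_assoc, hXX, mul_one]
  have hexp := Matrix.exp_units_conj U M
  rw [hconj] at hexp
  have h2 : NormedSpace.exp M = XA m n B * NormedSpace.exp M * XA m n B := hexp
  show XA m n B * NormedSpace.exp M = NormedSpace.exp M * XA m n B
  conv_lhs => rw [h2]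
  rw [← mul_assoc, ← mul_assoc, hXX, one_mul]

end ToricAux
end AuxProof

/-- If `Z_A = ∏_{e∈A} σ³_e` is not a product of star
operators (no `D ⊆ V` with `Z_A = ∏_{s∈D} Z_s`), then `⟨Z_A⟩ = 0`. -/
theorem toric_code_ZA_vanishes (m n : ℕ) [NeZero m] [NeZero n]
    (hm : 3 ≤ m) (hn : 3 ≤ n)
    (Jx Jz : Toric.Vtx m n → ℝ) (hJx : ∀ p, 0 ≤ Jx p) (hJz : ∀ s, 0 ≤ Jz s)
    (A : Finset (Toric.Edge m n))
    (h : ¬∃ D : Finset (Toric.Vtx m n), Toric.ZA m n A = Toric.ZProd m n D) :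
    Toric.gibbs m n Jx Jz (Toric.ZA m n A) = 0 := by
  classical
  set L : (Toric.Edge m n → ZMod 2) →ₗ[ZMod 2] (Toric.Vtx m n → ZMod 2) :=
    LinearMap.pi (fun s => ∑ e ∈ Toric.starSet m n s, LinearMap.proj e) with hL
  set a : Toric.Edge m n → ZMod 2 := fun e => if e ∈ A then 1 else 0 with ha
  have hLapp : ∀ (b : Toric.Edge m n → ZMod 2) (s : Toric.Vtx m n),
      L b s = ∑ e ∈ Toric.starSet m n s, b e := by
    intro b s
    simp [hL, LinearMap.pi_apply, LinearMap.sum_apply, LinearMap.proj_apply]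
  by_cases hall : ∀ b, L b = 0 → ∑ e, a e * b e = 0
  · exfalso; apply h
    obtain ⟨d, hd⟩ := ToricAux.dual_factor L a hall
    set D := Finset.univ.filter (fun s => d s = 1) with hD
    refine ⟨D, ?_⟩
    have hcount : ∀ e, (e ∈ A ↔
        Odd ((D.filter (fun s => e ∈ Toric.starSet m n s)).card)) := by
      intro e
      have h1 := hd e
      have h2 : ∀ s, L (Pi.single e 1) s = if e ∈ Toric.starSet m n s then 1 else 0 := by
        intro s; rw [hLapp]; exact Finset.sum_pi_single' e 1 _
      have h3 : ∑ s, d s * L (Pi.single e 1) s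
          = (((D.filter (fun s => e ∈ Toric.starSet m n s)).card : ℕ) : ZMod 2) := by
        rw [Finset.sum_congr rfl (fun s _ => by rw [h2 s])]
        simp only [mul_ite, mul_one, mul_zero]
        rw [← Finset.sum_filter, ToricAux.sum_zmod_card]
        congr 2
        ext s
        simp only [hD, Finset.mem_filter, Finset.mem_univ, true_and]
        tauto
      rw [h3] at h1
      by_cases he : e ∈ A
      · rw [ha] at h1
        simp only [if_pos he] at h1
        simp [he, (ToricAux.zmod_cast_one_iff _).mp h1.symm]
      · rw [ha] at h1
        simp only [if_neg he] at h1
        have := (ToricAux.zmod_cast_zero_iff _).mp h1.symm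
        simp [he, Nat.not_odd_iff_even.mpr this]
    have hfun : ∀ ω : Toric.SConf m n, (∏ e ∈ A, ω e) = ∏ s ∈ D, ∏ e ∈ Toric.starSet m n s, ω e := by
      intro ω
      symm
      calc ∏ s ∈ D, ∏ e ∈ Toric.starSet m n s, ω e
          = ∏ s ∈ D, ∏ e : Toric.Edge m n, (if e ∈ Toric.starSet m n s then ω e else 1) := by
            refine Finset.prod_congr rfl fun s _ => ?_
            rw [Finset.prod_ite_mem, Finset.univ_inter]
        _ = ∏ e : Toric.Edge m n, ∏ s ∈ D, (if e ∈ Toric.starSet m n s then ω e else 1) :=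
            Finset.prod_comm
        _ = ∏ e : Toric.Edge m n,
              (ω e) ^ ((D.filter (fun s => e ∈ Toric.starSet m n s)).card) := by
            refine Finset.prod_congr rfl fun e _ => ?_
            rw [Finset.prod_ite, Finset.prod_const, Finset.prod_const, one_pow, mul_one]
        _ = ∏ e : Toric.Edge m n, (if e ∈ A then ω e else 1) := by
            refine Finset.prod_congr rfl fun e _ => ?_
            rw [ToricAux.units_pow_ite]
            by_cases he : e ∈ A
            · rw [if_pos he, if_pos ((hcount e).mp he)]
            · rw [if_neg he, if_neg (fun hodd => he ((hcount e).mpr hodd))]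
        _ = ∏ e ∈ A, ω e := by rw [Finset.prod_ite_mem, Finset.univ_inter]
    unfold Toric.ZA Toric.ZProd
    exact congrArg Matrix.diagonal (funext fun ω => by rw [hfun ω])
  · push_neg at hall
    obtain ⟨b, hLb, hab⟩ := hall
    set B := Finset.univ.filter (fun e => b e = 1) with hB
    have hfe : ∀ S : Finset (Toric.Edge m n),
        S.filter (· ∈ B) = S.filter (fun e => b e = 1) :=
      fun S => Finset.filter_congr (fun e _ => by simp [hB])
    have h1 : ∀ s, ∏ e ∈ Toric.starSet m n s, Toric.aconf m n B e = 1 := by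
      intro s
      rw [ToricAux.prod_aconf, hfe]
      have h0 : L b s = 0 := by rw [hLb]; rfl
      rw [hLapp, ToricAux.sum_zmod_card] at h0
      exact Even.neg_one_pow ((ToricAux.zmod_cast_zero_iff _).mp h0)
    have h2 : ∏ e ∈ A, Toric.aconf m n B e = -1 := by
      rw [ToricAux.prod_aconf, hfe]
      have hsum : ∑ e, a e * b e
          = (((A.filter (fun e => b e = 1)).card : ℕ) : ZMod 2) := by
        rw [ha]
        simp only [ite_mul, one_mul, zero_mul]
        rw [← Finset.sum_filter, Finset.filter_univ_mem, ToricAux.sum_zmod_card]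
      rw [hsum] at hab
      have hx : ∀ x : ZMod 2, ¬ x = 0 → x = 1 := by decide
      exact Odd.neg_one_pow
        ((ToricAux.zmod_cast_one_iff _).mp (hx _ hab))
    -- matrix part
    set Xb := Toric.XA m n B with hXb
    set E := Toric.mexp m n (-Toric.H m n Jx Jz) with hE
    have hXX : Xb * Xb = 1 := ToricAux.XA_mul_XA m n B
    have hcomm : Commute Xb (-Toric.H m n Jx Jz) := by
      refine Commute.neg_right ?_
      unfold Toric.H
      refine Commute.sub_right (Commute.neg_right ?_) ?_
      · exact Commute.sum_right _ _ _
          (fun p _ => (ToricAux.XA_comm_X m n B p).smul_right (Jx p))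
      · exact Commute.sum_right _ _ _
          (fun s _ => (ToricAux.XA_comm_Z m n B s (h1 s)).smul_right (Jz s))
    have hXE : Xb * E = E * Xb := ToricAux.XA_comm_exp m n B _ hcomm
    have hZX : Toric.ZA m n A * Xb = -(Xb * Toric.ZA m n A) :=
      ToricAux.ZA_anticomm_XA m n B A h2
    have hXZ : Xb * Toric.ZA m n A = -(Toric.ZA m n A * Xb) := by rw [hZX, neg_neg]
    have hXZX : Xb * Toric.ZA m n A * Xb = -(Toric.ZA m n A) := by
      rw [hXZ, neg_mul, mul_assoc, hXX, mul_one]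
    have key2 : Xb * (Toric.ZA m n A * E) * Xb = -(Toric.ZA m n A) * E := by
      rw [← mul_assoc Xb (Toric.ZA m n A) E, mul_assoc (Xb * Toric.ZA m n A) E Xb,
        ← hXE, ← mul_assoc, hXZX]
    have e1 : Toric.ZA m n A * E = -(Xb * (Toric.ZA m n A * E) * Xb) := by
      rw [key2, neg_mul, neg_neg]
    have hT : (Toric.ZA m n A * E).trace = 0 := by
      have tr1 : (Xb * (Toric.ZA m n A * E) * Xb).trace = (Toric.ZA m n A * E).trace := by
        calc (Xb * (Toric.ZA m n A * E) * Xb).trace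
            = (Xb * ((Toric.ZA m n A * E) * Xb)).trace := by rw [mul_assoc]
          _ = ((Toric.ZA m n A * E) * Xb * Xb).trace := by
              rw [Matrix.trace_mul_comm]
          _ = (Toric.ZA m n A * E).trace := by rw [mul_assoc, hXX, mul_one]
      have key : (Toric.ZA m n A * E).trace = -((Toric.ZA m n A * E).trace) := by
        conv_lhs => rw [e1]
        rw [Matrix.trace_neg, tr1]
      linarith
    unfold Toric.gibbs
    rw [← hE, hT, zero_div]
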